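/- Let X be a finite alphabet. For x ∈ X^n let Ĥ_x be the empirical entropy of x and let P̃_n(x) = 2^{−nĤ_x} / ∑_{x'∈X^n} 2^{−nĤ_{x'}} be the universal guessing distribution. Then for every ρ > 0 and ε > 0 there exists N ∈ ℕ such that for all n ≥ N and all x ∈ X^n with Ĥ_x > 0: P̃_n(x) · ∑_{k=1}^∞ k^ρ (1 − P̃_n(x))^{k−1} ≤ 2^{n(ρ Ĥ_x + ε)}. -/

import Mathlib

open Finset

variable {X : Type*} [Fintype X] [DecidableEq X]

/-- Number of occurrences of the symbol `a` in the string `x ∈ X^n`. -/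
def occ {n : ℕ} (x : Fin n → X) (a : X) : ℕ :=
  (Finset.univ.filter fun i => x i = a).card

/-- Empirical entropy (base 2) of the string `x ∈ X^n`, with `0 log 0 = 0`. -/
noncomputable def empEnt {n : ℕ} (x : Fin n → X) : ℝ :=
  -∑ a : X, ((occ x a : ℝ) / n) * Real.logb 2 ((occ x a : ℝ) / n)

/-- The universal guessing distribution `P̃_n(x) = 2^{-nĤ_x}/∑_{x'} 2^{-nĤ_{x'}}`. -/
noncomputable def univDist {n : ℕ} (x : Fin n → X) : ℝ :=
  (2 : ℝ) ^ (-(n : ℝ) * empEnt x) / ∑ x' : Fin n → X, (2 : ℝ) ^ (-(n : ℝ) * empEnt x')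

lemma occ_sum {n : ℕ} (x : Fin n → X) : ∑ a : X, occ x a = n := by
  classical
  have := Finset.card_eq_sum_card_fiberwise
    (f := x) (s := (univ : Finset (Fin n))) (t := (univ : Finset X)) (fun i _ => mem_univ (x i))
  simpa [occ] using this.symm

lemma prod_occ {n : ℕ} (x : Fin n → X) (q : X → ℝ) :
    ∏ i, q (x i) = ∏ a : X, q a ^ occ x a := by
  classical
  rw [← Finset.prod_fiberwise_of_maps_to (t := (univ : Finset X)) (fun i _ => mem_univ (x i))
    (fun i => q (x i))]
  refine Finset.prod_congr rfl fun a _ => ?_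
  rw [occ, Finset.prod_congr rfl (fun i hi => by rw [(mem_filter.1 hi).2]), Finset.prod_const]

lemma two_rpow_neg_empEnt {n : ℕ} (hn : 0 < n) (x : Fin n → X) :
    (2 : ℝ) ^ (-(n : ℝ) * empEnt x) = ∏ a : X, ((occ x a : ℝ) / n) ^ occ x a := by
  have hne : (n : ℝ) ≠ 0 := Nat.cast_ne_zero.2 hn.ne'
  have h1 : -(n : ℝ) * empEnt x = ∑ a : X, (occ x a : ℝ) * Real.logb 2 ((occ x a : ℝ) / n) := by
    rw [empEnt, neg_mul_neg, Finset.mul_sum]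
    refine Finset.sum_congr rfl fun a _ => ?_
    rw [← mul_assoc, mul_comm (n : ℝ) _, div_mul_cancel₀ _ hne]
  rw [h1, Real.rpow_def_of_pos two_pos, Finset.mul_sum, Real.exp_sum]
  refine Finset.prod_congr rfl fun a _ => ?_
  rcases Nat.eq_zero_or_pos (occ x a) with h | h
  · simp [h]
  · have hq : (0:ℝ) < (occ x a : ℝ) / n := by
      apply div_pos (by exact_mod_cast h) (by exact_mod_cast hn)
    calc Real.exp (Real.log 2 * ((occ x a : ℝ) * Real.logb 2 ((occ x a : ℝ) / n)))
        = (2:ℝ) ^ ((occ x a : ℝ) * Real.logb 2 ((occ x a : ℝ) / n)) :=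
          (Real.rpow_def_of_pos two_pos _).symm
      _ = ((2:ℝ) ^ (Real.logb 2 ((occ x a : ℝ) / n))) ^ ((occ x a : ℕ) : ℝ) := by
          rw [mul_comm, Real.rpow_mul (by norm_num)]
      _ = ((occ x a : ℝ) / n) ^ ((occ x a : ℕ) : ℝ) := by
          rw [Real.rpow_logb two_pos (by norm_num) hq]
      _ = ((occ x a : ℝ) / n) ^ occ x a := Real.rpow_natCast _ _

lemma fiber_sum_le_one {n : ℕ} (hn : 0 < n) (S : Finset (Fin n → X))
    (hS : ∀ x' ∈ S, ∀ x'' ∈ S, ∀ a, occ x' a = occ x'' a) :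
    ∑ x' ∈ S, ∏ a : X, ((occ x' a : ℝ) / n) ^ occ x' a ≤ 1 := by
  rcases S.eq_empty_or_nonempty with rfl | ⟨x₀, hx₀⟩
  · simp
  have hne : (n : ℝ) ≠ 0 := Nat.cast_ne_zero.2 hn.ne'
  set q : X → ℝ := fun a => (occ x₀ a : ℝ) / n with hq
  have hterm : ∀ x' ∈ S, ∏ a : X, ((occ x' a : ℝ) / n) ^ occ x' a = ∏ i, q (x' i) := by
    intro x' hx'
    rw [prod_occ x' q]
    exact Finset.prod_congr rfl fun a _ => by rw [hq]; rw [hS x' hx' x₀ hx₀ a]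
  rw [Finset.sum_congr rfl hterm]
  have h2 : ∑ x' ∈ S, ∏ i, q (x' i) ≤ ∑ x' : Fin n → X, ∏ i, q (x' i) := by
    apply Finset.sum_le_sum_of_subset_of_nonneg (Finset.subset_univ S)
    exact fun x' _ _ => Finset.prod_nonneg fun i _ => by positivity
  refine h2.trans ?_
  have h3 : ∑ x' : Fin n → X, ∏ i, q (x' i) = ∏ i : Fin n, ∑ a : X, q a := by
    rw [← Finset.sum_prod_piFinset (univ : Finset X) (fun _ a => q a), Fintype.piFinset_univ]
  have h4 : ∑ a : X, q a = 1 := by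
    rw [hq, ← Finset.sum_div, ← Nat.cast_sum, occ_sum, div_self hne]
  rw [h3, h4]
  simp

lemma occ_lt {n : ℕ} (x : Fin n → X) (a : X) : occ x a < n + 1 :=
  Nat.lt_succ_of_le ((Finset.card_filter_le _ _).trans_eq (Finset.card_fin n))

lemma Z_le {n : ℕ} (hn : 0 < n) :
    ∑ x' : Fin n → X, (2 : ℝ) ^ (-(n : ℝ) * empEnt x') ≤ ((n : ℝ) + 1) ^ Fintype.card X := by
  classical
  have hrw : ∀ x' : Fin n → X, (2 : ℝ) ^ (-(n : ℝ) * empEnt x')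
      = ∏ a : X, ((occ x' a : ℝ) / n) ^ occ x' a := fun x' => two_rpow_neg_empEnt hn x'
  rw [Finset.sum_congr rfl fun x' _ => hrw x']
  set g : (Fin n → X) → (X → Fin (n + 1)) := fun x' a => ⟨occ x' a, occ_lt x' a⟩ with hg
  rw [← Finset.sum_fiberwise_of_maps_to (t := (univ : Finset (X → Fin (n + 1))))
    (fun i _ => mem_univ (g i)) (fun x' => ∏ a : X, ((occ x' a : ℝ) / n) ^ occ x' a)]
  calc ∑ j : X → Fin (n+1), ∑ x' ∈ univ.filter fun x' => g x' = j,
        ∏ a : X, ((occ x' a : ℝ) / n) ^ occ x' a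
      ≤ ∑ _j : X → Fin (n+1), (1:ℝ) := by
        refine Finset.sum_le_sum fun j _ => ?_
        apply fiber_sum_le_one hn
        intro x' hx' x'' hx'' a
        have h1 := (mem_filter.1 hx').2
        have h2 := (mem_filter.1 hx'').2
        have := congrArg (fun f => (f a : ℕ)) (h1.trans h2.symm)
        simpa [hg] using this
    _ = ((n : ℝ) + 1) ^ Fintype.card X := by
        rw [Finset.sum_const, Finset.card_univ, Fintype.card_fun, Fintype.card_fin]
        push_cast
        ring

lemma rpow_le_exp_aux {ρ lam y : ℝ} (hρ : 0 < ρ) (hl : 0 < lam) (hy : 0 < y) :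
    y ^ ρ ≤ (ρ / lam) ^ ρ * Real.exp (lam * y) := by
  have h1 : Real.log (lam * y / ρ) ≤ lam * y / ρ - 1 :=
    Real.log_le_sub_one_of_pos (by positivity)
  have h2 : Real.log (lam * y / ρ) = Real.log lam + Real.log y - Real.log ρ := by
    rw [Real.log_div (by positivity) hρ.ne', Real.log_mul hl.ne' hy.ne']
  rw [Real.rpow_def_of_pos hy, Real.rpow_def_of_pos (by positivity), ← Real.exp_add,
    Real.exp_le_exp, Real.log_div hρ.ne' hl.ne']
  rw [h2] at h1
  have h3 : lam * y / ρ * ρ = lam * y := by field_simp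
  nlinarith [hρ.le]

lemma tail_bound (ρ : ℝ) (hρ : 0 < ρ) {p : ℝ} (hp0 : 0 < p) (hp1 : p ≤ 1) :
    ∑' k : ℕ, ((k : ℝ) + 1) ^ ρ * (1 - p) ^ k
      ≤ (2 * ρ / p) ^ ρ * Real.exp 1 * (2 / p) := by
  have hhalf : 0 < p / 2 := by linarith
  have hr0 : (0:ℝ) ≤ 1 - p / 2 := by linarith
  have hr1 : 1 - p / 2 < 1 := by linarith
  have hq0 : (0:ℝ) ≤ 1 - p := by linarith
  -- key ratio bound
  have hratio : Real.exp (p / 2) * (1 - p) ≤ 1 - p / 2 := by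
    have e1 : Real.exp (p/2) * (1 - p/2) ≤ 1 := by
      have := Real.add_one_le_exp (-(p/2))
      have h := mul_le_mul_of_nonneg_left this (Real.exp_pos (p/2)).le
      rw [← Real.exp_add] at h
      simp at h
      nlinarith [Real.exp_pos (p/2)]
    nlinarith [Real.exp_pos (p/2), sq_nonneg p]
  set C := (2 * ρ / p) ^ ρ * Real.exp 1 with hC
  have hCpos : 0 < C := by positivity
  have hpt : ∀ k : ℕ, ((k : ℝ) + 1) ^ ρ * (1 - p) ^ k ≤ C * (1 - p / 2) ^ k := by
    intro k
    have hy : (0:ℝ) < (k : ℝ) + 1 := by positivity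
    have h1 : ((k : ℝ) + 1) ^ ρ ≤ (2 * ρ / p) ^ ρ * Real.exp (p / 2 * ((k : ℝ) + 1)) := by
      have := rpow_le_exp_aux hρ hhalf hy
      convert this using 3 <;> field_simp <;> ring
    have h2 : Real.exp (p / 2 * ((k : ℝ) + 1)) * (1 - p) ^ k
        ≤ Real.exp 1 * (1 - p / 2) ^ k := by
      have e2 : Real.exp (p / 2 * ((k : ℝ) + 1)) = Real.exp (p/2) * Real.exp (p/2) ^ k := by
        rw [← Real.exp_nat_mul, ← Real.exp_add]
        ring_nf
      rw [e2]
      have e3 : Real.exp (p/2) ^ k * (1 - p) ^ k ≤ (1 - p/2) ^ k := by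
        rw [← mul_pow]
        exact pow_le_pow_left₀ (by positivity) hratio k
      have e4 : Real.exp (p/2) ≤ Real.exp 1 := Real.exp_le_exp.2 (by linarith)
      calc Real.exp (p/2) * Real.exp (p/2) ^ k * (1 - p) ^ k
          = Real.exp (p/2) * (Real.exp (p/2) ^ k * (1 - p) ^ k) := by ring
        _ ≤ Real.exp (p/2) * (1 - p/2) ^ k := by
            exact mul_le_mul_of_nonneg_left e3 (Real.exp_pos _).le
        _ ≤ Real.exp 1 * (1 - p/2) ^ k := by
            exact mul_le_mul_of_nonneg_right e4 (by positivity)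
    calc ((k : ℝ) + 1) ^ ρ * (1 - p) ^ k
        ≤ ((2 * ρ / p) ^ ρ * Real.exp (p / 2 * ((k : ℝ) + 1))) * (1 - p) ^ k := by
          exact mul_le_mul_of_nonneg_right h1 (by positivity)
      _ = (2 * ρ / p) ^ ρ * (Real.exp (p / 2 * ((k : ℝ) + 1)) * (1 - p) ^ k) := by ring
      _ ≤ (2 * ρ / p) ^ ρ * (Real.exp 1 * (1 - p / 2) ^ k) := by
          exact mul_le_mul_of_nonneg_left h2 (by positivity)
      _ = C * (1 - p / 2) ^ k := by rw [hC]; ring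
  have hsum2 : Summable fun k : ℕ => C * (1 - p / 2) ^ k :=
    (summable_geometric_of_lt_one hr0 hr1).mul_left C
  have hsum1 : Summable fun k : ℕ => ((k : ℝ) + 1) ^ ρ * (1 - p) ^ k :=
    Summable.of_nonneg_of_le (fun k => by positivity) hpt hsum2
  calc ∑' k : ℕ, ((k : ℝ) + 1) ^ ρ * (1 - p) ^ k
      ≤ ∑' k : ℕ, C * (1 - p / 2) ^ k := Summable.tsum_le_tsum hpt hsum1 hsum2
    _ = C * (1 - (1 - p / 2))⁻¹ := by
        rw [tsum_mul_left, tsum_geometric_of_lt_one hr0 hr1]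
    _ = (2 * ρ / p) ^ ρ * Real.exp 1 * (2 / p) := by
        rw [hC]
        congr 1
        rw [show 1 - (1 - p/2) = p/2 by ring, inv_div]

set_option maxHeartbeats 2000000 in
/-- The conditional `ρ`-th guessing moment of independent random guesses drawn
from the universal distribution is at most `2^{n(ρĤ_x + ε)}`, uniformly in `x`,
for all large enough `n`. -/
theorem univDist_conditional_moment [Nonempty X] (ρ ε : ℝ) (hρ : 0 < ρ) (hε : 0 < ε) :
    ∃ N : ℕ, ∀ n : ℕ, N ≤ n → ∀ x : Fin n → X, 0 < empEnt x →
      univDist x * ∑' k : ℕ, ((k : ℝ) + 1) ^ ρ * (1 - univDist x) ^ k ≤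
        (2 : ℝ) ^ ((n : ℝ) * (ρ * empEnt x + ε)) := by
  classical
  set cX : ℕ := Fintype.card X with hcX
  set K : ℕ := ⌈(cX : ℝ) * ρ⌉₊ with hK
  set C : ℝ := (2 * ρ) ^ ρ * Real.exp 1 * 2 with hC
  have hCpos : 0 < C := by positivity
  set r : ℝ := (2 : ℝ) ^ ε with hr
  have hr1 : 1 < r := by
    rw [hr]
    exact (Real.one_lt_rpow_iff_of_pos two_pos).2 (Or.inl ⟨one_lt_two, hε⟩)
  have hrpos : 0 < r := lt_trans one_pos hr1
  -- eventual polynomial-vs-exponential bound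
  have h0 : Filter.Tendsto (fun m : ℕ => (m : ℝ) ^ K / r ^ m) Filter.atTop (nhds 0) :=
    tendsto_pow_const_div_const_pow_of_one_lt K hr1
  have h1 : Filter.Tendsto (fun n : ℕ => C * r * (((n + 1 : ℕ) : ℝ) ^ K / r ^ (n + 1)))
      Filter.atTop (nhds 0) := by
    have := (h0.comp (Filter.tendsto_add_atTop_nat 1)).const_mul (C * r)
    simpa using this
  have h2 : ∀ᶠ n : ℕ in Filter.atTop,
      C * r * (((n + 1 : ℕ) : ℝ) ^ K / r ^ (n + 1)) < 1 :=
    h1.eventually_lt_const one_pos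
  obtain ⟨N₀, hN₀⟩ := Filter.eventually_atTop.1 h2
  refine ⟨max N₀ 1, fun n hn x hH => ?_⟩
  have hn1 : 1 ≤ n := le_trans (le_max_right _ _) hn
  have hn0 : 0 < n := hn1
  have hpoly : C * ((n : ℝ) + 1) ^ K ≤ r ^ n := by
    have h := hN₀ n (le_trans (le_max_left _ _) hn)
    have hrn : (0:ℝ) < r ^ (n + 1) := pow_pos hrpos _
    rw [← mul_div_assoc, div_lt_one hrn] at h
    push_cast at h
    rw [pow_succ] at h
    nlinarith [hrpos, hCpos, pow_pos hrpos n, pow_nonneg (by positivity : (0:ℝ) ≤ (n:ℝ)+1) K]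
  -- basic facts about p = univDist x
  set A : ℝ := (2 : ℝ) ^ (-(n : ℝ) * empEnt x) with hA
  set Z : ℝ := ∑ x' : Fin n → X, (2 : ℝ) ^ (-(n : ℝ) * empEnt x') with hZ
  have hApos : 0 < A := Real.rpow_pos_of_pos two_pos _
  have hZpos : 0 < Z :=
    Finset.sum_pos (fun x' _ => Real.rpow_pos_of_pos two_pos _) univ_nonempty
  have hpdef : univDist x = A / Z := rfl
  set p : ℝ := univDist x with hp
  have hp0 : 0 < p := by rw [hpdef]; positivity
  have hp1 : p ≤ 1 := by
    rw [hpdef, div_le_one hZpos, hZ, hA]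
    exact Finset.single_le_sum (f := fun x' : Fin n → X => (2:ℝ) ^ (-(n:ℝ) * empEnt x'))
      (fun x' _ => (Real.rpow_pos_of_pos two_pos _).le) (mem_univ x)
  have hZle : Z ≤ ((n : ℝ) + 1) ^ cX := Z_le hn0
  have hAinv : A⁻¹ = (2 : ℝ) ^ ((n : ℝ) * empEnt x) := by
    rw [hA, ← Real.rpow_neg (by norm_num : (0:ℝ) ≤ 2), neg_mul, neg_neg]
  have hpinv : p⁻¹ ≤ ((n : ℝ) + 1) ^ cX * (2 : ℝ) ^ ((n : ℝ) * empEnt x) := by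
    rw [hpdef, inv_div, div_eq_mul_inv, hAinv]
    exact mul_le_mul_of_nonneg_right hZle (Real.rpow_nonneg (by norm_num) _)
  have hbase1 : (1:ℝ) ≤ (n : ℝ) + 1 := by
    have : (0:ℝ) ≤ (n : ℝ) := Nat.cast_nonneg n
    linarith
  calc p * ∑' k : ℕ, ((k : ℝ) + 1) ^ ρ * (1 - p) ^ k
      ≤ p * ((2 * ρ / p) ^ ρ * Real.exp 1 * (2 / p)) :=
        mul_le_mul_of_nonneg_left (tail_bound ρ hρ hp0 hp1) hp0.le
    _ = C * (p⁻¹) ^ ρ := by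
        rw [div_eq_mul_inv (2 * ρ) p, Real.mul_rpow (by positivity) (by positivity), hC]
        field_simp
    _ ≤ C * (((n : ℝ) + 1) ^ cX * (2 : ℝ) ^ ((n : ℝ) * empEnt x)) ^ ρ :=
        mul_le_mul_of_nonneg_left
          (Real.rpow_le_rpow (by positivity) hpinv hρ.le) hCpos.le
    _ = C * ((n : ℝ) + 1) ^ ((cX : ℝ) * ρ) * (2 : ℝ) ^ ((n : ℝ) * empEnt x * ρ) := by
        rw [Real.mul_rpow (by positivity) (by positivity),
          ← Real.rpow_natCast ((n : ℝ) + 1) cX, ← Real.rpow_mul (by positivity),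
          ← Real.rpow_mul (by norm_num : (0:ℝ) ≤ 2), mul_assoc, hC]
        ring
    _ ≤ (2 : ℝ) ^ ((n : ℝ) * ε) * (2 : ℝ) ^ ((n : ℝ) * empEnt x * ρ) := by
        refine mul_le_mul_of_nonneg_right ?_ (Real.rpow_nonneg (by norm_num) _)
        calc C * ((n : ℝ) + 1) ^ ((cX : ℝ) * ρ)
            ≤ C * ((n : ℝ) + 1) ^ ((K : ℕ) : ℝ) :=
              mul_le_mul_of_nonneg_left
                (Real.rpow_le_rpow_of_exponent_le hbase1 (Nat.le_ceil _)) hCpos.le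
          _ = C * ((n : ℝ) + 1) ^ K := by rw [Real.rpow_natCast]
          _ ≤ r ^ n := hpoly
          _ = (2 : ℝ) ^ ((n : ℝ) * ε) := by
              rw [hr, ← Real.rpow_natCast ((2:ℝ) ^ ε) n, ← Real.rpow_mul (by norm_num), mul_comm]
    _ = (2 : ℝ) ^ ((n : ℝ) * (ρ * empEnt x + ε)) := by
        rw [← Real.rpow_add two_pos]
        ring_nf
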